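/- Let F : I ⥤ Cat be a functor, let C be a category, and let G : ∫F ⥤ C be a functor from the Grothendieck construction of F. Suppose that for each i ∈ I the restriction G_i : F.obj i ⥤ ∫F ⥤ C admits a colimit σ_i, and that these assemble (via the canonical comparison maps) into a functor σ : I ⥤ C. If σ admits a colimit x in C, then G admits a colimit, and colim G ≅ x; that is, colim_{∫F} G ≅ colim_{i ∈ I} colim_{F.obj i} G_i. -/

import Mathlib

open CategoryTheory CategoryTheory.Limits

universe v₁ u₁ v₂ u₂ v u

/-- Colimit decomposition over a Grothendieck construction: if `G : ∫F ⥤ C` restricts on each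
fiber `F.obj i` to a diagram with colimit `σ.obj i` (via the cocones `ι i`), these colimits
assemble via the canonical comparison maps into the functor `σ : I ⥤ C`, and `σ` has a
colimit `t.pt`, then `G` has a colimit, and `colim G ≅ t.pt`. -/
theorem colimit_grothendieck_decomposition
    {I : Type u} [Category.{v} I] (F : I ⥤ Cat.{v₁, u₁})
    {C : Type u₂} [Category.{v₂} C]
    (G : Grothendieck F ⥤ C) (σ : I ⥤ C)
    (ι : ∀ (i : I) (a : F.obj i), G.obj ⟨i, a⟩ ⟶ σ.obj i)
    (hnat : ∀ (i : I) {a a' : F.obj i} (φ : a ⟶ a'),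
      G.map ((Grothendieck.ι F i).map φ) ≫ ι i a' = ι i a)
    (hcolim : ∀ (i : I) (Z : C) (g : ∀ a : F.obj i, G.obj ⟨i, a⟩ ⟶ Z),
      (∀ {a a' : F.obj i} (φ : a ⟶ a'),
        G.map ((Grothendieck.ι F i).map φ) ≫ g a' = g a) →
      ∃! m : σ.obj i ⟶ Z, ∀ a : F.obj i, ι i a ≫ m = g a)
    (hcompat : ∀ {i i' : I} (u : i ⟶ i') (a : F.obj i),
      ι i a ≫ σ.map u =
        G.map ({ base := u, fiber := 𝟙 _ } :
            (⟨i, a⟩ : Grothendieck F) ⟶ ⟨i', (F.map u).toFunctor.obj a⟩) ≫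
          ι i' ((F.map u).toFunctor.obj a))
    (t : Cocone σ) (ht : IsColimit t) :
    HasColimit G ∧
      ∀ (hG : HasColimit G), Nonempty (@colimit _ _ _ _ G hG ≅ t.pt) := by
  classical
  -- factorization of a general morphism of the Grothendieck construction
  have hfact : ∀ {p q : Grothendieck F} (f : p ⟶ q),
      f = ({ base := f.base, fiber := 𝟙 _ } :
            p ⟶ ⟨q.base, (F.map f.base).toFunctor.obj p.fiber⟩) ≫
          (Grothendieck.ι F q.base).map f.fiber := by
    intro p q f
    apply Grothendieck.ext <;> simp [Grothendieck.ι]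
    rw [← Category.assoc]
    erw [eqToHom_trans]
  -- the cocone over G with point t.pt
  let c : Cocone G :=
    { pt := t.pt
      ι :=
        { app := fun p => ι p.base p.fiber ≫ t.ι.app p.base
          naturality := fun p q f => by
            erw [hfact f, Functor.map_comp, Category.assoc, Category.assoc,
              ← Category.assoc (G.map ((Grothendieck.ι F q.base).map f.fiber)),
              hnat q.base f.fiber, ← Category.assoc, ← hcompat f.base p.fiber,
              Category.assoc, t.w f.base]
            simp
            erw [Functor.const_obj_map, Category.comp_id] } }
  have hc : IsColimit c := by
    apply IsColimit.ofExistsUnique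
    intro s
    -- the fiberwise descents
    have key : ∀ i : I, ∃! m : σ.obj i ⟶ s.pt,
        ∀ a : F.obj i, ι i a ≫ m = s.ι.app ⟨i, a⟩ := by
      intro i
      refine hcolim i s.pt (fun a => s.ι.app ⟨i, a⟩) ?_
      intro a a' φ
      exact s.w ((Grothendieck.ι F i).map φ)
    choose m hm hmu using key
    have hσnat : ∀ {i i' : I} (u : i ⟶ i'), σ.map u ≫ m i' = m i := by
      intro i i' u
      refine hmu i _ ?_
      intro a
      rw [← Category.assoc, hcompat u a, Category.assoc, hm i' ((F.map u).toFunctor.obj a)]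
      simpa using s.w ({ base := u, fiber := 𝟙 _ } :
        (⟨i, a⟩ : Grothendieck F) ⟶ ⟨i', (F.map u).toFunctor.obj a⟩)
    let sσ : Cocone σ :=
      { pt := s.pt
        ι := { app := m, naturality := fun i i' u => by simpa using hσnat u } }
    refine ⟨ht.desc sσ, ?_, ?_⟩
    · intro p
      have : t.ι.app p.base ≫ ht.desc sσ = m p.base := ht.fac sσ p.base
      simp only [c]
      rw [Category.assoc, this, hm p.base p.fiber]
    · intro m' hm'
      refine ht.uniq sσ m' ?_
      intro i
      refine hmu i _ ?_
      intro a
      rw [← Category.assoc]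
      exact hm' ⟨i, a⟩
  refine ⟨⟨⟨⟨c, hc⟩⟩⟩, fun hG => ⟨?_⟩⟩
  exact (colimit.isColimit G).coconePointUniqueUpToIso hc
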